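/- For real s, γ, θ, τ and ν ∈ [−1/2, 1/2], set a = i, b = cos γ · i + sin γ · j, f = cos θ · i + sin θ · j, h = ν · i + √(1 − ν²) · (cos τ · j + sin τ · k), p = exp(s · im(b*h)), q = exp(s · im(f*a⁻¹*h)), and G₂ = re(p * q * star(h) * a). Then there exist s₀ ∈ (0, 1] and C > 0 such that for all s with |s| ≤ s₀ and all γ, θ, τ ∈ ℝ, ν ∈ [−1/2, 1/2]: |G₂ − (ν − s·cos γ)| ≤ C·(s² + |s·ν|). (The second-order expansion of G₂ in Lemma 3.1 of the paper: G₂ = (1 − sR₆)(ν − s cos γ + s²R₃).) -/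

import Mathlib

open Quaternion

/-- The imaginary unit `i` of the quaternions. -/
noncomputable def qi : ℍ[ℝ] := ⟨0, 1, 0, 0⟩
/-- The imaginary unit `j` of the quaternions. -/
noncomputable def qj : ℍ[ℝ] := ⟨0, 0, 1, 0⟩
/-- The imaginary unit `k` of the quaternions. -/
noncomputable def qk : ℍ[ℝ] := ⟨0, 0, 0, 1⟩

/-- `a = i`. -/
noncomputable def qa : ℍ[ℝ] := qi
/-- `b = cos γ · i + sin γ · j`. -/
noncomputable def qb (γ : ℝ) : ℍ[ℝ] := Real.cos γ • qi + Real.sin γ • qj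
/-- `f = cos θ · i + sin θ · j`. -/
noncomputable def qf (θ : ℝ) : ℍ[ℝ] := Real.cos θ • qi + Real.sin θ • qj
/-- `h = ν·i + √(1−ν²)·(cos τ·j + sin τ·k)`. -/
noncomputable def qh (τ ν : ℝ) : ℍ[ℝ] :=
  ν • qi + Real.sqrt (1 - ν ^ 2) • (Real.cos τ • qj + Real.sin τ • qk)
/-- `p = exp(s·im(b·h))`. -/
noncomputable def qp (s γ τ ν : ℝ) : ℍ[ℝ] :=
  NormedSpace.exp (s • Quaternion.im (qb γ * qh τ ν))
/-- `q = exp(s·im(f·a⁻¹·h))`. -/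
noncomputable def qq (s θ τ ν : ℝ) : ℍ[ℝ] :=
  NormedSpace.exp (s • Quaternion.im (qf θ * qa⁻¹ * qh τ ν))
/-- The earring defining function `G₂ = re(p·q·star(h)·a)`. -/
noncomputable def G2 (s γ θ τ ν : ℝ) : ℝ :=
  (qp s γ τ ν * qq s θ τ ν * star (qh τ ν) * qa).re

lemma qa_inv : qa⁻¹ = -qa := by
  apply inv_eq_of_mul_eq_one_right; ext <;> simp [qa, Quaternion.re_mul, Quaternion.imI_mul, Quaternion.imJ_mul, Quaternion.imK_mul] <;> simp [qi]

lemma re_abs_le (x : ℍ[ℝ]) : |x.re| ≤ ‖x‖ := by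
  rw [norm_eq_sqrt_real_inner, Quaternion.inner_self, ← Real.sqrt_sq_eq_abs]
  apply Real.sqrt_le_sqrt
  rw [Quaternion.normSq_def']
  nlinarith [sq_nonneg x.imI, sq_nonneg x.imJ, sq_nonneg x.imK]

lemma im_norm_le (x : ℍ[ℝ]) : ‖x.im‖ ≤ ‖x‖ := by
  rw [norm_eq_sqrt_real_inner, Quaternion.inner_self,
      norm_eq_sqrt_real_inner, Quaternion.inner_self]
  apply Real.sqrt_le_sqrt
  rw [Quaternion.normSq_def', Quaternion.normSq_def']
  simp [sq_nonneg]

lemma norm_qh (τ ν : ℝ) (hν : ν ^ 2 ≤ 1) : ‖qh τ ν‖ = 1 := by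
  have h1 : Real.sqrt (1 - ν ^ 2) ^ 2 = 1 - ν ^ 2 := Real.sq_sqrt (by linarith)
  have h2 := Real.sin_sq_add_cos_sq τ
  rw [norm_eq_sqrt_real_inner, Quaternion.inner_self, Quaternion.normSq_def']
  rw [show (qh τ ν).re ^ 2 + (qh τ ν).imI ^ 2 + (qh τ ν).imJ ^ 2 + (qh τ ν).imK ^ 2 = 1 by
    simp [qh, Quaternion.re_smul]; simp [qi, qj, qk]; nlinarith [h1, h2]]
  exact Real.sqrt_one

lemma norm_qb (γ : ℝ) : ‖qb γ‖ = 1 := by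
  have h2 := Real.sin_sq_add_cos_sq γ
  rw [norm_eq_sqrt_real_inner, Quaternion.inner_self, Quaternion.normSq_def']
  rw [show (qb γ).re ^ 2 + (qb γ).imI ^ 2 + (qb γ).imJ ^ 2 + (qb γ).imK ^ 2 = 1 by
    simp [qb, Quaternion.re_smul]; simp [qi, qj]]
  exact Real.sqrt_one

lemma norm_qf (θ : ℝ) : ‖qf θ‖ = 1 := by
  have h2 := Real.sin_sq_add_cos_sq θ
  rw [norm_eq_sqrt_real_inner, Quaternion.inner_self, Quaternion.normSq_def']
  rw [show (qf θ).re ^ 2 + (qf θ).imI ^ 2 + (qf θ).imJ ^ 2 + (qf θ).imK ^ 2 = 1 by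
    simp [qf, Quaternion.re_smul]; simp [qi, qj]]
  exact Real.sqrt_one

lemma norm_qa : ‖qa‖ = 1 := by
  rw [norm_eq_sqrt_real_inner, Quaternion.inner_self, Quaternion.normSq_def']
  rw [show (qa).re ^ 2 + (qa).imI ^ 2 + (qa).imJ ^ 2 + (qa).imK ^ 2 = 1 by
    simp [qa, qi]]
  exact Real.sqrt_one

lemma re_u (τ ν : ℝ) : (star (qh τ ν) * qa).re = ν := by
  simp [qh, qa, Quaternion.re_mul, Quaternion.re_smul]; simp [qi, qj, qk]

lemma re_vu (γ θ τ ν : ℝ) :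
    (((qb γ * qh τ ν).im + (qf θ * qa⁻¹ * qh τ ν).im) * (star (qh τ ν) * qa)).re =
      -Real.cos γ * (Real.sqrt (1 - ν ^ 2))^2
      + ν * (Real.sin γ * Real.sqrt (1 - ν ^ 2) * Real.cos τ
             + Real.sin θ * Real.sqrt (1 - ν ^ 2) * Real.sin τ) := by
  rw [qa_inv]
  simp [qh, qa, qb, qf, Quaternion.re_mul, Quaternion.imI_mul, Quaternion.imJ_mul, Quaternion.imK_mul, Quaternion.re_smul]; simp [qi, qj, qk]
  linear_combination (-(Real.cos γ * Real.sqrt (1 - ν ^ 2) ^ 2)) * Real.sin_sq_add_cos_sq τ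

lemma qp_def (s γ τ ν : ℝ) : qp s γ τ ν = NormedSpace.exp (s • (qb γ * qh τ ν).im) := rfl
lemma qq_def (s θ τ ν : ℝ) : qq s θ τ ν = NormedSpace.exp (s • (qf θ * qa⁻¹ * qh τ ν).im) := rfl
lemma G2_def (s γ θ τ ν : ℝ) :
    G2 s γ θ τ ν = (qp s γ τ ν * qq s θ τ ν * star (qh τ ν) * qa).re := rfl

lemma exp_bound (x : ℍ[ℝ]) (h0 : x.re = 0) (h1 : ‖x‖ ≤ 1) :
    ‖NormedSpace.exp x - 1 - x‖ ≤ ‖x‖ ^ 2 := by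
  rcases eq_or_ne x 0 with rfl | hx
  · simp [NormedSpace.exp_zero]
  have hrpos : 0 < ‖x‖ := norm_pos_iff.mpr hx
  set r := ‖x‖ with hr
  rw [Quaternion.exp_of_re_eq_zero x h0]
  have heq : (↑(Real.cos r) : ℍ[ℝ]) + (Real.sin r / r) • x - 1 - x
      = (↑(Real.cos r - 1) : ℍ[ℝ]) + (Real.sin r / r - 1) • x := by
    push_cast
    rw [sub_smul, one_smul]
    abel
  rw [heq]
  have hb1 : ‖(↑(Real.cos r - 1) : ℍ[ℝ])‖ ≤ r ^ 2 / 2 := by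
    rw [Quaternion.norm_coe, Real.norm_eq_abs, abs_le]
    have := Real.one_sub_sq_div_two_le_cos (x := r)
    have := Real.cos_le_one r
    constructor <;> nlinarith
  have hb2 : ‖(Real.sin r / r - 1) • x‖ ≤ r ^ 2 / 4 := by
    rw [norm_smul, Real.norm_eq_abs]
    have h3 : |Real.sin r / r - 1| = |Real.sin r - r| / r := by
      rw [show Real.sin r / r - 1 = (Real.sin r - r) / r by field_simp,
        abs_div, abs_of_pos hrpos]
    rw [h3, div_mul_cancel₀ _ (ne_of_gt hrpos)]
    have hs1 : Real.sin r ≤ r := Real.sin_le hrpos.le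
    have hs2 : r - r ^ 3 / 4 < Real.sin r := lt_of_le_of_lt (by have := pow_pos hrpos 3; linarith) (Real.sin_gt_sub_cube hrpos)
    rw [abs_of_nonpos (by linarith)]
    nlinarith
  calc ‖(↑(Real.cos r - 1) : ℍ[ℝ]) + (Real.sin r / r - 1) • x‖
      ≤ ‖(↑(Real.cos r - 1) : ℍ[ℝ])‖ + ‖(Real.sin r / r - 1) • x‖ := norm_add_le _ _
    _ ≤ r ^ 2 / 2 + r ^ 2 / 4 := add_le_add hb1 hb2
    _ ≤ r ^ 2 := by nlinarith [sq_nonneg r]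

set_option maxHeartbeats 2000000 in
/-- The second-order expansion of `G₂` in Lemma 3.1 of the paper:
`G₂ = (1 − sR₆)(ν − s cos γ + s²R₃)`, in the form of the estimate
`|G₂ − (ν − s·cos γ)| ≤ C·(s² + |s·ν|)` for all small `s`. -/
theorem G2_expansion :
    ∃ s₀ ∈ Set.Ioc (0 : ℝ) 1, ∃ C > (0 : ℝ),
      ∀ s γ θ τ ν : ℝ, |s| ≤ s₀ → ν ∈ Set.Icc (-(1/2) : ℝ) (1/2) →
        |G2 s γ θ τ ν - (ν - s * Real.cos γ)| ≤ C * (s ^ 2 + |s * ν|) := by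
  refine ⟨1, ⟨one_pos, le_refl 1⟩, 6, by norm_num, ?_⟩
  intro s γ θ τ ν hs hν
  obtain ⟨hν1, hν2⟩ := hν
  have hν3 : ν ^ 2 ≤ 1 := by nlinarith
  set w : ℝ := Real.sqrt (1 - ν ^ 2) with hwdef
  have hw : w ^ 2 = 1 - ν ^ 2 := Real.sq_sqrt (by linarith)
  have hw0 : 0 ≤ w := Real.sqrt_nonneg _
  have hw1 : w ≤ 1 := by nlinarith
  -- norms
  have nh : ‖qh τ ν‖ = 1 := norm_qh τ ν hν3
  have nfa : ‖qf θ * qa⁻¹‖ = 1 := by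
    rw [norm_mul, norm_inv, norm_qf, norm_qa]; norm_num
  obtain ⟨x1, hx1def⟩ : ∃ x : ℍ[ℝ], x = s • (qb γ * qh τ ν).im := ⟨_, rfl⟩
  obtain ⟨x2, hx2def⟩ : ∃ x : ℍ[ℝ], x = s • (qf θ * qa⁻¹ * qh τ ν).im := ⟨_, rfl⟩
  have nx1 : ‖x1‖ ≤ |s| := by
    rw [hx1def, norm_smul, Real.norm_eq_abs]
    calc |s| * ‖(qb γ * qh τ ν).im‖ ≤ |s| * ‖qb γ * qh τ ν‖ :=
          mul_le_mul_of_nonneg_left (im_norm_le _) (abs_nonneg s)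
      _ = |s| := by rw [norm_mul, norm_qb, nh]; ring
  have nx2 : ‖x2‖ ≤ |s| := by
    rw [hx2def, norm_smul, Real.norm_eq_abs]
    calc |s| * ‖(qf θ * qa⁻¹ * qh τ ν).im‖ ≤ |s| * ‖qf θ * qa⁻¹ * qh τ ν‖ :=
          mul_le_mul_of_nonneg_left (im_norm_le _) (abs_nonneg s)
      _ = |s| := by rw [norm_mul, nfa, nh]; ring
  have rx1 : x1.re = 0 := by simp [hx1def, Quaternion.re_smul]
  have rx2 : x2.re = 0 := by simp [hx2def, Quaternion.re_smul]
  obtain ⟨e1, he1def⟩ : ∃ x : ℍ[ℝ], x = qp s γ τ ν - 1 - x1 := ⟨_, rfl⟩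
  obtain ⟨e2, he2def⟩ : ∃ x : ℍ[ℝ], x = qq s θ τ ν - 1 - x2 := ⟨_, rfl⟩
  have ne1 : ‖e1‖ ≤ s ^ 2 := by
    have := exp_bound x1 rx1 (nx1.trans hs)
    rw [he1def]
    calc ‖qp s γ τ ν - 1 - x1‖ = ‖NormedSpace.exp x1 - 1 - x1‖ := by
          rw [qp_def, ← hx1def]
      _ ≤ ‖x1‖ ^ 2 := this
      _ ≤ s ^ 2 := by nlinarith [norm_nonneg x1, abs_nonneg s, sq_abs s]
  have ne2 : ‖e2‖ ≤ s ^ 2 := by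
    have := exp_bound x2 rx2 (nx2.trans hs)
    rw [he2def]
    calc ‖qq s θ τ ν - 1 - x2‖ = ‖NormedSpace.exp x2 - 1 - x2‖ := by
          rw [qq_def, ← hx2def]
      _ ≤ ‖x2‖ ^ 2 := this
      _ ≤ s ^ 2 := by nlinarith [norm_nonneg x2, abs_nonneg s, sq_abs s]
  have hp : qp s γ τ ν = 1 + x1 + e1 := by rw [he1def]; abel
  have hq : qq s θ τ ν = 1 + x2 + e2 := by rw [he2def]; abel
  obtain ⟨E, hEdef⟩ : ∃ x : ℍ[ℝ], x = x1 * x2 + x1 * e2 + e1 + e1 * x2 + e1 * e2 + e2 := ⟨_, rfl⟩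
  have hpq : qp s γ τ ν * qq s θ τ ν = 1 + x1 + x2 + E := by
    rw [hp, hq, hEdef]; noncomm_ring
  have hs2 : s ^ 2 ≤ 1 := by nlinarith [sq_abs s, abs_nonneg s]
  have nE : ‖E‖ ≤ 6 * s ^ 2 := by
    have t1 : ‖x1 * x2‖ ≤ s ^ 2 := by
      rw [norm_mul]; nlinarith [norm_nonneg x1, norm_nonneg x2, abs_nonneg s, sq_abs s]
    have t2 : ‖x1 * e2‖ ≤ s ^ 2 := by
      rw [norm_mul]
      calc ‖x1‖ * ‖e2‖ ≤ 1 * s ^ 2 := by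
            apply mul_le_mul (nx1.trans hs) ne2 (norm_nonneg _) zero_le_one
        _ = s ^ 2 := one_mul _
    have t4 : ‖e1 * x2‖ ≤ s ^ 2 := by
      rw [norm_mul]
      calc ‖e1‖ * ‖x2‖ ≤ s ^ 2 * 1 := by
            apply mul_le_mul ne1 (nx2.trans hs) (norm_nonneg _) (by nlinarith)
        _ = s ^ 2 := mul_one _
    have t5 : ‖e1 * e2‖ ≤ s ^ 2 := by
      rw [norm_mul]
      calc ‖e1‖ * ‖e2‖ ≤ s ^ 2 * s ^ 2 := by
            apply mul_le_mul ne1 ne2 (norm_nonneg _) (by nlinarith)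
        _ ≤ s ^ 2 := by nlinarith [sq_nonneg s]
    rw [hEdef]
    calc ‖x1 * x2 + x1 * e2 + e1 + e1 * x2 + e1 * e2 + e2‖
        ≤ ‖x1 * x2 + x1 * e2 + e1 + e1 * x2 + e1 * e2‖ + ‖e2‖ := norm_add_le _ _
      _ ≤ ‖x1 * x2 + x1 * e2 + e1 + e1 * x2‖ + ‖e1 * e2‖ + ‖e2‖ := by
          gcongr; exact norm_add_le _ _
      _ ≤ ‖x1 * x2 + x1 * e2 + e1‖ + ‖e1 * x2‖ + ‖e1 * e2‖ + ‖e2‖ := by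
          gcongr; exact norm_add_le _ _
      _ ≤ ‖x1 * x2 + x1 * e2‖ + ‖e1‖ + ‖e1 * x2‖ + ‖e1 * e2‖ + ‖e2‖ := by
          gcongr; exact norm_add_le _ _
      _ ≤ ‖x1 * x2‖ + ‖x1 * e2‖ + ‖e1‖ + ‖e1 * x2‖ + ‖e1 * e2‖ + ‖e2‖ := by
          gcongr; exact norm_add_le _ _
      _ ≤ 6 * s ^ 2 := by linarith
  obtain ⟨u, hudef⟩ : ∃ x : ℍ[ℝ], x = star (qh τ ν) * qa := ⟨_, rfl⟩
  have nu : ‖u‖ = 1 := by rw [hudef, norm_mul, Quaternion.norm_star, nh, norm_qa]; norm_num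
  have hG : G2 s γ θ τ ν = u.re + (x1 * u).re + (x2 * u).re + (E * u).re := by
    rw [G2_def, mul_assoc, ← hudef, hpq,
      show (1 + x1 + x2 + E) * u = u + x1 * u + x2 * u + E * u by noncomm_ring]
    simp [Quaternion.re_add]
  have hx12u : (x1 * u).re + (x2 * u).re =
      s * (-Real.cos γ * w ^ 2
        + ν * (Real.sin γ * w * Real.cos τ + Real.sin θ * w * Real.sin τ)) := by
    rw [hx1def, hx2def, smul_mul_assoc, smul_mul_assoc, Quaternion.re_smul,
      Quaternion.re_smul, smul_eq_mul, smul_eq_mul, ← mul_add, ← Quaternion.re_add, ← add_mul,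
      hudef, re_vu]
  obtain ⟨R, hRdef⟩ : ∃ x : ℝ, x = (E * u).re := ⟨_, rfl⟩
  have nR : |R| ≤ 6 * s ^ 2 := by
    rw [hRdef]
    calc |(E * u).re| ≤ ‖E * u‖ := re_abs_le _
      _ = ‖E‖ := by rw [norm_mul, nu, mul_one]
      _ ≤ 6 * s ^ 2 := nE
  have key : G2 s γ θ τ ν - (ν - s * Real.cos γ) =
      s * ν * (ν * Real.cos γ + (Real.sin γ * w * Real.cos τ + Real.sin θ * w * Real.sin τ)) + R := by
    have hure : u.re = ν := by rw [hudef]; exact re_u τ ν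
    rw [hG, hure, ← hRdef]
    linear_combination hx12u + (-s * Real.cos γ) * hw
  have hB : |ν * Real.cos γ + (Real.sin γ * w * Real.cos τ + Real.sin θ * w * Real.sin τ)| ≤ 3 := by
    have c1 := Real.abs_cos_le_one γ
    have c2 := Real.abs_sin_le_one γ
    have c3 := Real.abs_sin_le_one θ
    have c4 := Real.abs_cos_le_one τ
    have c5 := Real.abs_sin_le_one τ
    have hν4 : |ν| ≤ 1 / 2 := abs_le.mpr ⟨by linarith, hν2⟩
    have b1 : |ν * Real.cos γ| ≤ 1 := by
      rw [abs_mul]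
      nlinarith [abs_nonneg ν, abs_nonneg (Real.cos γ)]
    have b2 : |Real.sin γ * w * Real.cos τ| ≤ 1 := by
      rw [abs_mul, abs_mul, abs_of_nonneg hw0]
      nlinarith [abs_nonneg (Real.sin γ), abs_nonneg (Real.cos τ),
        mul_nonneg (abs_nonneg (Real.sin γ)) hw0]
    have b3 : |Real.sin θ * w * Real.sin τ| ≤ 1 := by
      rw [abs_mul, abs_mul, abs_of_nonneg hw0]
      nlinarith [abs_nonneg (Real.sin θ), abs_nonneg (Real.sin τ),
        mul_nonneg (abs_nonneg (Real.sin θ)) hw0]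
    calc |ν * Real.cos γ + (Real.sin γ * w * Real.cos τ + Real.sin θ * w * Real.sin τ)|
        ≤ |ν * Real.cos γ| + (|Real.sin γ * w * Real.cos τ| + |Real.sin θ * w * Real.sin τ|) := by
          refine (abs_add_le _ _).trans ?_; gcongr; exact abs_add_le _ _
      _ ≤ 3 := by linarith
  rw [key]
  calc |s * ν * (ν * Real.cos γ + (Real.sin γ * w * Real.cos τ + Real.sin θ * w * Real.sin τ)) + R|
      ≤ |s * ν| * |ν * Real.cos γ + (Real.sin γ * w * Real.cos τ + Real.sin θ * w * Real.sin τ)|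
        + |R| := by rw [← abs_mul]; exact abs_add_le _ _
    _ ≤ |s * ν| * 3 + 6 * s ^ 2 :=
        add_le_add (mul_le_mul_of_nonneg_left hB (abs_nonneg _)) nR
    _ ≤ 6 * (s ^ 2 + |s * ν|) := by nlinarith [abs_nonneg (s * ν)]
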